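/- The minimum number of clique-vertex assignments over all edge clique covers of a graph G (i.e., the minimum of the sum of clique sizes) is at least the intersection number of G, and can be strictly greater than achieved by a clique-minimum cover: there exists a graph for which no edge clique cover simultaneously minimizes the number of cliques and the total number of vertex-clique assignments. -/

import Mathlib

/-- `𝒞` is an edge clique cover of `G`: a family of cliques such that every
edge of `G` is contained in at least one clique of the family. -/
def IsECC {V : Type*} (G : SimpleGraph V) (𝒞 : Finset (Finset V)) : Prop :=
  (∀ C ∈ 𝒞, G.IsClique (C : Set V)) ∧
  ∀ u v : V, G.Adj u v → ∃ C ∈ 𝒞, u ∈ C ∧ v ∈ C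

/-- The intersection number of `G`: the minimum number of cliques in an
edge clique cover of `G`. -/
noncomputable def interNum {V : Type*} (G : SimpleGraph V) : ℕ :=
  sInf {n | ∃ 𝒞 : Finset (Finset V), IsECC G 𝒞 ∧ 𝒞.card = n}

/-- The assignment number of `G`: the minimum total number of vertex-clique
assignments (sum of clique sizes) over all edge clique covers of `G`. -/
noncomputable def assignNum {V : Type*} (G : SimpleGraph V) : ℕ :=
  sInf {n | ∃ 𝒞 : Finset (Finset V), IsECC G 𝒞 ∧ ∑ C ∈ 𝒞, C.card = n}

/-! ### Auxiliary material -/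

section Part1

variable {V : Type*} [Fintype V] [DecidableEq V] (G : SimpleGraph V)

lemma exists_ECC_sum : ∃ m, ∃ 𝒞 : Finset (Finset V), IsECC G 𝒞 ∧ ∑ C ∈ 𝒞, C.card = m := by
  classical
  refine ⟨_, Finset.univ.powerset.filter (fun C => G.IsClique (C : Set V)), ⟨?_, ?_⟩, rfl⟩
  · intro C hC
    exact (Finset.mem_filter.mp hC).2
  · intro u v huv
    refine ⟨{u, v}, ?_, by simp, by simp⟩
    refine Finset.mem_filter.mpr ⟨Finset.mem_powerset.mpr (Finset.subset_univ _), ?_⟩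
    have : ((({u, v} : Finset V) : Set V)) = {u, v} := by simp
    rw [this]
    exact SimpleGraph.isClique_pair.mpr (fun _ => huv)

lemma interNum_le_assignNum : interNum G ≤ assignNum G := by
  classical
  have hne : {n | ∃ 𝒞 : Finset (Finset V), IsECC G 𝒞 ∧ ∑ C ∈ 𝒞, C.card = n}.Nonempty := by
    obtain ⟨m, h⟩ := exists_ECC_sum G
    exact ⟨m, h⟩
  obtain ⟨𝒞, h𝒞, hsum⟩ := Nat.sInf_mem hne
  set 𝒞' := 𝒞.filter (fun C => C.Nonempty) with h𝒞'
  have hECC' : IsECC G 𝒞' := by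
    constructor
    · intro C hC
      exact h𝒞.1 C (Finset.mem_filter.mp hC).1
    · intro u v huv
      obtain ⟨C, hC, hu, hv⟩ := h𝒞.2 u v huv
      exact ⟨C, Finset.mem_filter.mpr ⟨hC, ⟨u, hu⟩⟩, hu, hv⟩
  have h1 : interNum G ≤ 𝒞'.card := Nat.sInf_le ⟨𝒞', hECC', rfl⟩
  have h2 : 𝒞'.card ≤ ∑ C ∈ 𝒞', C.card := by
    rw [Finset.card_eq_sum_ones]
    refine Finset.sum_le_sum ?_
    intro C hC
    exact Nat.one_le_iff_ne_zero.mpr (Finset.card_ne_zero_of_mem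
      (Finset.mem_filter.mp hC).2.choose_spec)
  have h3 : ∑ C ∈ 𝒞', C.card ≤ ∑ C ∈ 𝒞, C.card :=
    Finset.sum_le_sum_of_subset (Finset.filter_subset _ _)
  have h4 : ∑ C ∈ 𝒞, C.card = assignNum G := hsum
  omega

end Part1

/-! ### The example graph on 8 vertices -/

def eL : List (ℕ × ℕ) :=
  [(0,1),(0,4),(0,5),(0,7),(1,2),(1,5),(1,6),(1,7),(2,3),(2,4),(2,5),
   (3,4),(3,5),(3,6),(3,7),(4,6),(4,7),(5,6),(6,7)]

def G8 : SimpleGraph (Fin 8) := SimpleGraph.fromRel (fun u v => (u.val, v.val) ∈ eL)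

instance : DecidableRel G8.Adj := fun u v =>
  decidable_of_iff _ (SimpleGraph.fromRel_adj _ u v).symm

/-- Weight function certifying `interNum G8 ≥ 7` (7 pairwise independent edges). -/
def yI (u v : Fin 8) : ℕ :=
  if (u.val, v.val) ∈ [(0,1),(0,4),(1,2),(1,6),(2,4),(3,5),(3,7)] then 1 else 0

/-- Weight function certifying `assignNum G8 ≥ 21` (LP dual). -/
def yA (u v : Fin 8) : ℕ :=
  (([((0:ℕ),(1:ℕ),(1:ℕ)),(0,4,2),(0,5,2),(0,7,1),(1,2,2),(1,6,2),(1,7,1),(2,3,1),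
     (2,4,2),(2,5,1),(3,5,1),(3,6,1),(3,7,2),(4,6,1),(5,6,1)].filter
    (fun t => t.1 = u.val ∧ t.2.1 = v.val)).map (fun t => t.2.2)).sum

/-- Weight function certifying `𝒞.card + ∑ C.card ≥ 29` for every edge clique
cover `𝒞` of `G8` (LP dual of the mixed problem). -/
def yM (u v : Fin 8) : ℕ :=
  (([((0:ℕ),(1:ℕ),(1:ℕ)),(0,4,3),(0,5,3),(0,7,1),(1,2,3),(1,6,2),(1,7,2),(2,3,1),
     (2,4,3),(2,5,1),(3,5,2),(3,7,3),(4,6,2),(5,6,2)].filter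
    (fun t => t.1 = u.val ∧ t.2.1 = v.val)).map (fun t => t.2.2)).sum

/-- A clique-minimum edge clique cover of `G8` (7 cliques, 22 assignments). -/
def C1 : Finset (Finset (Fin 8)) :=
  {{0,1,5}, {0,4,7}, {1,2,5}, {1,6,7}, {2,3,4}, {3,5,6}, {3,4,6,7}}

/-- An assignment-minimum edge clique cover of `G8` (8 cliques, 21 assignments). -/
def C2 : Finset (Finset (Fin 8)) :=
  {{0,1,7}, {0,4}, {0,5}, {1,2}, {1,5,6}, {2,3,5}, {2,4}, {3,4,6,7}}

/-- The key double counting lemma: if an edge weighting `y` (supported on the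
adjacency relation) satisfies `∑_{(u,v) ∈ C × C} y u v ≤ α + β·|C|` for every
clique `C`, then every edge clique cover `𝒞` satisfies
`∑ y ≤ α·|𝒞| + β·(∑_{C ∈ 𝒞} |C|)`. -/
lemma weight_bound {n : ℕ} (G : SimpleGraph (Fin n)) (y : Fin n → Fin n → ℕ)
    (hsupp : ∀ u v, y u v ≠ 0 → G.Adj u v) (α β : ℕ)
    (hcl : ∀ C : Finset (Fin n), G.IsClique (C : Set (Fin n)) →
      (∑ u ∈ C, ∑ v ∈ C, y u v) ≤ α + β * C.card)
    (𝒞 : Finset (Finset (Fin n))) (h : IsECC G 𝒞) :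
    (∑ u, ∑ v, y u v) ≤ α * 𝒞.card + β * ∑ C ∈ 𝒞, C.card := by
  classical
  set s : Finset (Fin n × Fin n) :=
    Finset.univ.filter (fun p => y p.1 p.2 ≠ 0) with hs
  set g : Fin n × Fin n → Finset (Fin n) := fun p =>
    if hp : G.Adj p.1 p.2 then (h.2 p.1 p.2 hp).choose else ∅ with hg
  have hgmem : ∀ p ∈ s, g p ∈ 𝒞 ∧ p.1 ∈ g p ∧ p.2 ∈ g p := by
    intro p hp
    have hadj : G.Adj p.1 p.2 := hsupp _ _ (Finset.mem_filter.mp hp).2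
    have hspec := (h.2 p.1 p.2 hadj).choose_spec
    simp only [hg, dif_pos hadj]
    exact ⟨hspec.1, hspec.2.1, hspec.2.2⟩
  have step1 : (∑ u, ∑ v, y u v) = ∑ p ∈ s, y p.1 p.2 := by
    have e1 : (∑ u, ∑ v, y u v) = ∑ p : Fin n × Fin n, y p.1 p.2 :=
      (Finset.sum_product Finset.univ Finset.univ (fun p => y p.1 p.2)).symm
    have e2 : ∑ p ∈ s, y p.1 p.2 = ∑ p : Fin n × Fin n, y p.1 p.2 := by
      apply Finset.sum_subset (Finset.subset_univ _)
      intro p _ hp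
      by_contra h0
      exact hp (Finset.mem_filter.mpr ⟨Finset.mem_univ _, h0⟩)
    exact e1.trans e2.symm
  have step2 : ∑ p ∈ s, y p.1 p.2
      = ∑ C ∈ 𝒞, ∑ p ∈ s.filter (fun p => g p = C), y p.1 p.2 :=
    (Finset.sum_fiberwise_of_maps_to (fun p hp => (hgmem p hp).1) _).symm
  have step3 : ∀ C ∈ 𝒞, ∑ p ∈ s.filter (fun p => g p = C), y p.1 p.2
      ≤ α + β * C.card := by
    intro C hC
    have hsub : s.filter (fun p => g p = C) ⊆ C ×ˢ C := by
      intro p hp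
      obtain ⟨hps, hpg⟩ := Finset.mem_filter.mp hp
      obtain ⟨_, h1, h2⟩ := hgmem p hps
      rw [hpg] at h1 h2
      exact Finset.mem_product.mpr ⟨h1, h2⟩
    calc ∑ p ∈ s.filter (fun p => g p = C), y p.1 p.2
        ≤ ∑ p ∈ C ×ˢ C, y p.1 p.2 :=
          Finset.sum_le_sum_of_subset hsub
      _ = ∑ u ∈ C, ∑ v ∈ C, y u v := Finset.sum_product _ _ _
      _ ≤ α + β * C.card := hcl C (h.1 C hC)
  calc (∑ u, ∑ v, y u v)
      = ∑ C ∈ 𝒞, ∑ p ∈ s.filter (fun p => g p = C), y p.1 p.2 := step1.trans step2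
    _ ≤ ∑ C ∈ 𝒞, (α + β * C.card) := Finset.sum_le_sum step3
    _ = α * 𝒞.card + β * ∑ C ∈ 𝒞, C.card := by
        rw [Finset.sum_add_distrib, Finset.sum_const, Finset.mul_sum]
        ring_nf

set_option maxRecDepth 100000 in
lemma hECC1 : IsECC G8 C1 := by
  constructor
  · decide
  · decide

set_option maxRecDepth 100000 in
lemma hECC2 : IsECC G8 C2 := by
  constructor
  · decide
  · decide

set_option maxRecDepth 100000 in
lemma hclI : ∀ C : Finset (Fin 8), G8.IsClique (C : Set (Fin 8)) →
    (∑ u ∈ C, ∑ v ∈ C, yI u v) ≤ 1 + 0 * C.card := by decide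

set_option maxRecDepth 100000 in
lemma hclA : ∀ C : Finset (Fin 8), G8.IsClique (C : Set (Fin 8)) →
    (∑ u ∈ C, ∑ v ∈ C, yA u v) ≤ 0 + 1 * C.card := by decide

set_option maxRecDepth 100000 in
lemma hclM : ∀ C : Finset (Fin 8), G8.IsClique (C : Set (Fin 8)) →
    (∑ u ∈ C, ∑ v ∈ C, yM u v) ≤ 1 + 1 * C.card := by decide

set_option maxRecDepth 100000 in
lemma hsuppI : ∀ u v, yI u v ≠ 0 → G8.Adj u v := by decide
set_option maxRecDepth 100000 in
lemma hsuppA : ∀ u v, yA u v ≠ 0 → G8.Adj u v := by decide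
set_option maxRecDepth 100000 in
lemma hsuppM : ∀ u v, yM u v ≠ 0 → G8.Adj u v := by decide

set_option maxRecDepth 100000 in
lemma totI : (∑ u, ∑ v, yI u v) = 7 := by decide
set_option maxRecDepth 100000 in
lemma totA : (∑ u, ∑ v, yA u v) = 21 := by decide
set_option maxRecDepth 100000 in
lemma totM : (∑ u, ∑ v, yM u v) = 29 := by decide

set_option maxRecDepth 100000 in
lemma cardC1 : C1.card = 7 := by decide
set_option maxRecDepth 100000 in
lemma sumC2 : ∑ C ∈ C2, C.card = 21 := by decide

lemma interNum_G8 : interNum G8 = 7 := by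
  have hle : interNum G8 ≤ 7 := Nat.sInf_le ⟨C1, hECC1, cardC1⟩
  have hne : {n | ∃ 𝒞 : Finset (Finset (Fin 8)), IsECC G8 𝒞 ∧ 𝒞.card = n}.Nonempty :=
    ⟨7, C1, hECC1, cardC1⟩
  obtain ⟨𝒞, h𝒞, hcard⟩ := Nat.sInf_mem hne
  have := weight_bound G8 yI hsuppI 1 0 hclI 𝒞 h𝒞
  have hcard' : 𝒞.card = interNum G8 := hcard
  rw [totI] at this
  simp only [one_mul, zero_mul, add_zero] at this
  omega

lemma assignNum_G8 : assignNum G8 = 21 := by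
  have hle : assignNum G8 ≤ 21 := Nat.sInf_le ⟨C2, hECC2, sumC2⟩
  have hne : {n | ∃ 𝒞 : Finset (Finset (Fin 8)), IsECC G8 𝒞 ∧ ∑ C ∈ 𝒞, C.card = n}.Nonempty :=
    ⟨21, C2, hECC2, sumC2⟩
  obtain ⟨𝒞, h𝒞, hsum⟩ := Nat.sInf_mem hne
  have := weight_bound G8 yA hsuppA 0 1 hclA 𝒞 h𝒞
  have hsum' : ∑ C ∈ 𝒞, C.card = assignNum G8 := hsum
  rw [totA] at this
  simp only [zero_mul, one_mul, zero_add] at this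
  omega

/-- The minimum number of vertex-clique assignments over all edge clique covers
is at least the intersection number, and there is a graph for which no edge
clique cover simultaneously attains the minimum number of cliques and the
minimum number of assignments. -/
theorem interNum_le_assignNum_and_not_simultaneous :
    (∀ (V : Type) [Fintype V] [DecidableEq V] (G : SimpleGraph V),
      interNum G ≤ assignNum G) ∧
    ∃ (n : ℕ) (G : SimpleGraph (Fin n)),
      ¬ ∃ 𝒞 : Finset (Finset (Fin n)), IsECC G 𝒞 ∧
        𝒞.card = interNum G ∧ ∑ C ∈ 𝒞, C.card = assignNum G := by
  constructor
  · intro V _ _ G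
    exact interNum_le_assignNum G
  · refine ⟨8, G8, ?_⟩
    rintro ⟨𝒞, h𝒞, hcard, hsum⟩
    rw [interNum_G8] at hcard
    rw [assignNum_G8] at hsum
    have := weight_bound G8 yM hsuppM 1 1 hclM 𝒞 h𝒞
    rw [totM, hcard, hsum] at this
    omega
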